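/- The only matrix g ∈ SL(3,ℤ) satisfying the three conditions gᵀ·A(1,0,0)·g = A(1,0,0), gᵀ·A(1,1,0)·g = A(1,1,0), and gᵀ·[[4,1,2],[1,4,2],[2,2,4]]·g = [[4,1,2],[1,4,2],[2,2,4]] is the identity matrix, where A(1,0,0) = [[2,0,0],[0,2,1],[0,1,2]] and A(1,1,0) = [[2,0,1],[0,2,1],[1,1,2]]. -/
import Mathlib


open Matrix

/-- `SL(3, ℤ)`, the group of 3 × 3 integer matrices of determinant one. -/
abbrev SL3 := Matrix.SpecialLinearGroup (Fin 3) ℤ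

set_option linter.all false in
set_option maxHeartbeats 1000000 in
/-- The only `g ∈ SL(3, ℤ)` fixing the three quadratic forms `A(1,0,0)`, `A(1,1,0)` and
`2·A(1,1,1/2) = [[4,1,2],[1,4,2],[2,2,4]]` under the congruence action `A · g = gᵀ A g`
is the identity (triviality of the stabilizer of the 2-cell `t₂ = QM′N`). -/
theorem stabilizer_of_cell_QM'N_trivial (g : SL3)
    (h1 : (g : Matrix (Fin 3) (Fin 3) ℤ)ᵀ * !![2, 0, 0; 0, 2, 1; 0, 1, 2] *
        (g : Matrix (Fin 3) (Fin 3) ℤ) = !![2, 0, 0; 0, 2, 1; 0, 1, 2])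
    (h2 : (g : Matrix (Fin 3) (Fin 3) ℤ)ᵀ * !![2, 0, 1; 0, 2, 1; 1, 1, 2] *
        (g : Matrix (Fin 3) (Fin 3) ℤ) = !![2, 0, 1; 0, 2, 1; 1, 1, 2])
    (h3 : (g : Matrix (Fin 3) (Fin 3) ℤ)ᵀ * !![4, 1, 2; 1, 4, 2; 2, 2, 4] *
        (g : Matrix (Fin 3) (Fin 3) ℤ) = !![4, 1, 2; 1, 4, 2; 2, 2, 4]) :
    g = 1 := by
  set G := (g : Matrix (Fin 3) (Fin 3) ℤ) with hGdef
  have hdet : G.det = 1 := g.2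
  have hGH : G * G.adjugate = 1 := by
    rw [Matrix.mul_adjugate, hdet, one_smul]
  set H := G.adjugate with hHdef
  have hTT : Hᵀ * Gᵀ = 1 := by
    rw [← Matrix.transpose_mul, hGH, Matrix.transpose_one]
  have key : ∀ B : Matrix (Fin 3) (Fin 3) ℤ, Gᵀ * B * G = B → Hᵀ * B = B * G := by
    intro B hB
    conv_lhs => rw [← hB]
    simp only [← mul_assoc]
    rw [hTT, one_mul]
  clear_value H
  clear_value G
  have e1 := key _ h1
  have e2 := key _ h2
  have e3 := key _ h3
  have E100 := Matrix.ext_iff.mpr e1 0 0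
  have E101 := Matrix.ext_iff.mpr e1 0 1
  have E102 := Matrix.ext_iff.mpr e1 0 2
  have E110 := Matrix.ext_iff.mpr e1 1 0
  have E111 := Matrix.ext_iff.mpr e1 1 1
  have E112 := Matrix.ext_iff.mpr e1 1 2
  have E120 := Matrix.ext_iff.mpr e1 2 0
  have E121 := Matrix.ext_iff.mpr e1 2 1
  have E122 := Matrix.ext_iff.mpr e1 2 2
  have E200 := Matrix.ext_iff.mpr e2 0 0
  have E201 := Matrix.ext_iff.mpr e2 0 1
  have E202 := Matrix.ext_iff.mpr e2 0 2
  have E210 := Matrix.ext_iff.mpr e2 1 0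
  have E211 := Matrix.ext_iff.mpr e2 1 1
  have E212 := Matrix.ext_iff.mpr e2 1 2
  have E220 := Matrix.ext_iff.mpr e2 2 0
  have E221 := Matrix.ext_iff.mpr e2 2 1
  have E222 := Matrix.ext_iff.mpr e2 2 2
  have E300 := Matrix.ext_iff.mpr e3 0 0
  have E301 := Matrix.ext_iff.mpr e3 0 1
  have E302 := Matrix.ext_iff.mpr e3 0 2
  have E310 := Matrix.ext_iff.mpr e3 1 0
  have E311 := Matrix.ext_iff.mpr e3 1 1
  have E312 := Matrix.ext_iff.mpr e3 1 2
  have E320 := Matrix.ext_iff.mpr e3 2 0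
  have E321 := Matrix.ext_iff.mpr e3 2 1
  have E322 := Matrix.ext_iff.mpr e3 2 2
  simp [Matrix.mul_apply, Fin.sum_univ_three] at E100 E101 E102 E110 E111 E112 E120 E121 E122 E200 E201 E202 E210 E211 E212 E220 E221 E222 E300 E301 E302 E310 E311 E312 E320 E321 E322
  have hG00 : G 0 0 = H 2 2 := by omega
  have hG01 : G 0 1 = 0 := by omega
  have hG02 : G 0 2 = 0 := by omega
  have hG10 : G 1 0 = 0 := by omega
  have hG11 : G 1 1 = H 2 2 := by omega
  have hG12 : G 1 2 = 0 := by omega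
  have hG20 : G 2 0 = 0 := by omega
  have hG21 : G 2 1 = 0 := by omega
  have hG22 : G 2 2 = H 2 2 := by omega
  have hH00 : H 0 0 = H 2 2 := by omega
  have hH10 : H 1 0 = 0 := by omega
  have hH20 : H 2 0 = 0 := by omega
  have q := Matrix.ext_iff.mpr hGH 0 0
  simp only [Matrix.mul_apply, Fin.sum_univ_three, Matrix.one_apply_eq] at q
  rw [hG00, hG01, hG02, hH00, hH10, hH20] at q
  rw [Matrix.det_fin_three] at hdet
  rw [hG00, hG01, hG02, hG10, hG11, hG12, hG20, hG21, hG22] at hdet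
  have q' : H 2 2 * H 2 2 = 1 := by linear_combination q
  have hdet' : H 2 2 * (H 2 2 * H 2 2) = 1 := by linear_combination hdet
  have hr : H 2 2 = 1 := by
    calc H 2 2 = H 2 2 * (H 2 2 * H 2 2) := by rw [q', mul_one]
    _ = 1 := hdet'
  have hG1 : G = 1 := by
    ext i j
    fin_cases i <;> fin_cases j <;>
      simp [Matrix.one_apply, hG00, hG01, hG02, hG10, hG11, hG12, hG20, hG21, hG22, hr]
  have hcoe : (g : Matrix (Fin 3) (Fin 3) ℤ) = 1 := hGdef.symm.trans hG1
  exact Subtype.coe_injective (hcoe.trans Matrix.SpecialLinearGroup.coe_one.symm)
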